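/- arXiv:math-ph/0503007 — 2 statements merged into one kernel-verified Lean document; each statement's English description precedes it below -/
import Mathlib

section
/- Let A be a G-graded ρ-algebra and Ω*(A) its ℤ×G-graded algebra of universal differential forms with extension cocycle ρ̄ on Ḡ = ℤ × G satisfying ρ̄|_{G×G} = ρ and ρ̄((1,0),(n+1,α)) + ρ̄((1,0),(n,α)) = 0. Then every such cocycle ρ̄ is of the form ρ̄((n,α),(m,β)) = (−1)^{nm} φ^{−m}(α) φ^{n}(β) ρ(α,β) for a unique group homomorphism φ : G → U(k), where φ(α) = ρ̄((1,0),(0,α)). -/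
/-- Every cocycle `ρ̄` on `Ḡ = ℤ × G` restricting to `ρ` on `G` and
satisfying `ρ̄((1,0),(n+1,α)) + ρ̄((1,0),(n,α)) = 0` is of the form
`ρ̄((n,α),(m,β)) = (−1)^{nm} φ(α)^{−m} φ(β)^{n} ρ(α,β)` for a unique group homomorphism
`φ : G → U(k)`, with `φ(α) = ρ̄((1,0),(0,α))`. -/
theorem extended_cocycle_classification
    {k : Type*} [Field k] {G : Type*} [AddCommGroup G]
    (ρ : G → G → k)
    (hρ1 : ∀ a b : G, ρ a b * ρ b a = 1)
    (hρ2 : ∀ a b c : G, ρ (a + b) c = ρ a c * ρ b c)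
    (ρb : ℤ × G → ℤ × G → k)
    (hρb1 : ∀ x y : ℤ × G, ρb x y * ρb y x = 1)
    (hρb2 : ∀ x y z : ℤ × G, ρb (x + y) z = ρb x z * ρb y z)
    (hrestrict : ∀ α β : G, ρb (0, α) (0, β) = ρ α β)
    (hsign : ∀ (n : ℤ) (α : G), ρb (1, 0) (n + 1, α) + ρb (1, 0) (n, α) = 0) :
    ∃! φ : G → kˣ,
      (∀ α β : G, φ (α + β) = φ α * φ β) ∧
      (∀ α : G, (φ α : k) = ρb (1, 0) (0, α)) ∧
      (∀ (n m : ℤ) (α β : G),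
        ρb (n, α) (m, β) =
          (-1 : k) ^ (n * m) * ((φ α ^ (-m) : kˣ) : k) * ((φ β ^ n : kˣ) : k) * ρ α β) := by
  have hne : ∀ x y : ℤ × G, ρb x y ≠ 0 := by
    intro x y h
    have := hρb1 x y
    rw [h, zero_mul] at this
    exact zero_ne_one this
  set u : ℤ × G → ℤ × G → kˣ := fun x y => Units.mk0 (ρb x y) (hne x y) with hu
  have hval : ∀ x y, (u x y : k) = ρb x y := fun x y => rfl
  have hadd1 : ∀ x y z, u (x + y) z = u x z * u y z := by
    intro x y z
    ext
    simp only [Units.val_mul, hval, hρb2]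
  have hsymm : ∀ x y, u y x = (u x y)⁻¹ := by
    intro x y
    rw [eq_inv_iff_mul_eq_one]
    ext
    simp only [Units.val_mul, Units.val_one, hval]
    exact hρb1 y x
  have hadd2 : ∀ x y z, u x (y + z) = u x y * u x z := by
    intro x y z
    rw [hsymm (y + z) x, hadd1, mul_inv, ← hsymm y x, ← hsymm z x]
  have hzero1 : ∀ z, u 0 z = 1 := by
    intro z
    have := hadd1 0 0 z
    rw [add_zero] at this
    exact (right_eq_mul.mp this)
  have hneg1 : ∀ x z, u (-x) z = (u x z)⁻¹ := by
    intro x z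
    rw [eq_inv_iff_mul_eq_one, ← hadd1, neg_add_cancel, hzero1]
  have hz1 : ∀ (n : ℤ) (x z : ℤ × G), u (n • x) z = u x z ^ n := by
    intro n x z
    induction n using Int.induction_on with
    | zero => simp [hzero1]
    | succ n ih => rw [add_smul, one_smul, hadd1, ih, zpow_add_one]
    | pred n ih => rw [sub_smul, one_smul, sub_eq_add_neg, hadd1, ih, hneg1, zpow_sub_one]
  have hz2 : ∀ (n : ℤ) (x z : ℤ × G), u x (n • z) = u x z ^ n := by
    intro n x z
    rw [hsymm (n • z) x, hz1, ← inv_zpow, ← hsymm z x]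
  set φ : G → kˣ := fun α => u (1, 0) (0, α) with hφ
  -- u (1,0) (1,0) = -1
  have hm1 : u (1, 0) ((1 : ℤ), (0 : G)) = -1 := by
    have h0 : ρb (1, 0) (0, 0) = 1 := by
      have := hzero1 ((1 : ℤ), (0 : G))
      have : (u ((1 : ℤ), (0 : G)) 0 : k) = 1 := by
        rw [hsymm, Units.val_inv_eq_inv_val, hzero1]
        simp
      exact this
    have := hsign 0 0
    rw [zero_add, h0] at this
    ext
    simp only [Units.val_neg, Units.val_one, hval]
    exact eq_neg_of_add_eq_zero_left this
  have hdecomp : ∀ (n : ℤ) (α : G), ((n, α) : ℤ × G) = n • ((1 : ℤ), (0 : G)) + (0, α) := by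
    intro n α
    simp [Prod.ext_iff]
  have hmain : ∀ (n m : ℤ) (α β : G),
      u (n, α) (m, β) = (-1) ^ (n * m) * φ α ^ (-m) * φ β ^ n * u (0, α) (0, β) := by
    intro n m α β
    have hφ' : ∀ γ : G, u (1, 0) (0, γ) = φ γ := fun _ => rfl
    rw [hdecomp n α, hadd1, hz1, hdecomp m β, hadd2, hadd2, hz2, hz2, hm1,
      hsymm ((1 : ℤ), (0 : G)) ((0 : ℤ), α), hφ' β, hφ' α]
    rw [mul_zpow, ← zpow_mul, inv_zpow, ← zpow_neg, mul_comm m n]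
    rw [mul_assoc ((-1 : kˣ) ^ (n * m)), mul_left_comm (φ β ^ n) (φ α ^ (-m)), ← mul_assoc, ← mul_assoc]
  refine ⟨φ, ⟨?_, fun α => rfl, ?_⟩, ?_⟩
  · intro α β
    have h : ((0, α + β) : ℤ × G) = (0, α) + (0, β) := by simp [Prod.ext_iff]
    rw [hφ]
    simp only
    rw [h, hadd2]
  · intro n m α β
    have := congrArg Units.val (hmain n m α β)
    simp only [Units.val_mul, hval] at this
    rw [this, hrestrict]
    congr 1
    congr 2
    · rw [Units.val_zpow_eq_zpow_val]
      norm_num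
  · intro ψ ⟨h1, h2, h3⟩
    funext α
    exact Units.ext (h2 α)
end

section
/- Given a twisted cocycle ρ on an abelian group G and a group homomorphism φ : G → U(k), the map ρ̄ : (ℤ×G) × (ℤ×G) → k defined by ρ̄((n,α),(m,β)) = (−1)^{nm} φ(α)^{−m} φ(β)^{n} ρ(α,β) is a twisted cocycle on ℤ × G: ρ̄(x,y)ρ̄(y,x) = 1 and ρ̄(x+y,z) = ρ̄(x,z)ρ̄(y,z) for all x, y, z ∈ ℤ × G, and it satisfies ρ̄((1,0),(n,α)) = (−1)^n φ(α). -/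
/-- The extension of a cocycle `ρ` on `G` to `ℤ × G` associated with a homomorphism
`φ : G → U(k)`: `ρ̄((n,α),(m,β)) = (−1)^{nm} φ(α)^{−m} φ(β)^{n} ρ(α,β)`. -/
noncomputable def extCocycle {k : Type*} [Field k] {G : Type*} [AddCommGroup G]
    (ρ : G → G → k) (φ : G → kˣ) (x y : ℤ × G) : k :=
  (-1 : k) ^ (x.1 * y.1) * ((φ x.2 ^ (-y.1) : kˣ) : k) * ((φ y.2 ^ x.1 : kˣ) : k) *
    ρ x.2 y.2

/-- Given a twisted cocycle `ρ` on `G` and a homomorphism `φ : G → U(k)`,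
the map `ρ̄((n,α),(m,β)) = (−1)^{nm} φ(α)^{−m} φ(β)^{n} ρ(α,β)` is a twisted cocycle on
`ℤ × G`, and `ρ̄((1,0),(n,α)) = (−1)^n φ(α)`. -/
theorem extCocycle_is_cocycle {k : Type*} [Field k] {G : Type*} [AddCommGroup G]
    (ρ : G → G → k)
    (hρ1 : ∀ a b : G, ρ a b * ρ b a = 1)
    (hρ2 : ∀ a b c : G, ρ (a + b) c = ρ a c * ρ b c)
    (φ : G → kˣ) (hφ : ∀ α β : G, φ (α + β) = φ α * φ β) :
    (∀ x y : ℤ × G, extCocycle ρ φ x y * extCocycle ρ φ y x = 1) ∧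
    (∀ x y z : ℤ × G, extCocycle ρ φ (x + y) z = extCocycle ρ φ x z * extCocycle ρ φ y z) ∧
    (∀ (n : ℤ) (α : G), extCocycle ρ φ (1, 0) (n, α) = (-1 : k) ^ n * (φ α : k)) := by
  have hne : (-1 : k) ≠ 0 := by norm_num
  refine ⟨?_, ?_, ?_⟩
  · rintro ⟨n, a⟩ ⟨m, b⟩
    simp only [extCocycle]
    have e1 : (-1 : k) ^ (n * m) * (-1 : k) ^ (m * n) = 1 := by
      rw [← zpow_add₀ hne, mul_comm m n, ← two_mul]
      rw [zpow_mul]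
      norm_num
    have e2 : ((φ a ^ (-m) : kˣ) : k) * ((φ a ^ m : kˣ) : k) = 1 := by
      rw [← Units.val_mul, ← zpow_add]; simp
    have e3 : ((φ b ^ n : kˣ) : k) * ((φ b ^ (-n) : kˣ) : k) = 1 := by
      rw [← Units.val_mul, ← zpow_add]; simp
    calc ((-1:k) ^ (n * m) * ((φ a ^ (-m) : kˣ):k) * ((φ b ^ n : kˣ):k) * ρ a b) *
          ((-1:k) ^ (m * n) * ((φ b ^ (-n) : kˣ):k) * ((φ a ^ m : kˣ):k) * ρ b a)
        = ((-1:k) ^ (n*m) * (-1:k) ^ (m*n)) * (((φ a ^ (-m) : kˣ):k) * ((φ a ^ m : kˣ):k)) *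
          (((φ b ^ n : kˣ):k) * ((φ b ^ (-n) : kˣ):k)) * (ρ a b * ρ b a) := by ring
      _ = 1 := by rw [e1, e2, e3, hρ1]; ring
  · rintro ⟨n, a⟩ ⟨n', a'⟩ ⟨m, b⟩
    simp only [extCocycle, Prod.fst_add, Prod.snd_add]
    rw [add_mul, zpow_add₀ hne, hφ, mul_zpow, zpow_add (φ b), hρ2,
      Units.val_mul, Units.val_mul]
    ring
  · intro n a
    have hφ0 : φ 0 = 1 := by
      have := hφ 0 0
      rw [add_zero] at this
      exact (mul_left_cancel (a := φ 0) (by rw [mul_one, ← this])).symm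
    have hρ0 : ρ 0 a = 1 := by
      have h2 := hρ2 0 0 a
      rw [add_zero] at h2
      have hne0 : ρ 0 a ≠ 0 := by
        intro h
        have := hρ1 0 a
        rw [h] at this; simp at this
      field_simp at h2
      exact h2.symm
    simp only [extCocycle]
    rw [hφ0, hρ0]
    simp
end
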